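/- Lemma 2 (exact remainder bound): define R := ∫ ((π_n − π₀)/π_n)(V)·(m_n − m₀)(V) dμ + ∫ [ ((g_n − g₀)/g_n)(W)·(Q_n − Q₀)(1,W) + ((g_n − g₀)/(1 − g_n))(W)·(Q_n − Q₀)(0,W) ] dμ. Assume π_n∘V ≥ μ_Π μ-a.e. and g_n∘W ≥ μ_g and 1 − g_n∘W ≥ μ_g μ-a.e. for constants μ_Π, μ_g > 0, and assume (π_n − π₀)∘V, (m_n − m₀)∘V, (g_n − g₀)∘W, (Q_n − Q₀)(1,·)∘W, (Q_n − Q₀)(0,·)∘W all lie in L²(μ). Then |R| ≤ μ_Π⁻¹·‖(π_n − π₀)∘V‖_{L²(μ)}·‖(m_n − m₀)∘V‖_{L²(μ)} + μ_g⁻¹·‖(g_n − g₀)∘W‖_{L²(μ)}·( ‖(Q_n − Q₀)(1,·)∘W‖_{L²(μ)} + ‖(Q_n − Q₀)(0,·)∘W‖_{L²(μ)} ). -/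

import Mathlib

open MeasureTheory

section Helpers

variable {Ω : Type*} {mΩ : MeasurableSpace Ω} {μ : Measure Ω}

lemma aux_integrable_mul {f g : Ω → ℝ} (hf : MemLp f 2 μ) (hg : MemLp g 2 μ) :
    Integrable (fun ω => f ω * g ω) μ := by
  refine Integrable.mono' ((hf.integrable_sq.add hg.integrable_sq).div_const 2)
    (hf.1.mul hg.1) ?_
  filter_upwards with ω
  simp only [Pi.add_apply, Real.norm_eq_abs, abs_mul]
  nlinarith [abs_nonneg (f ω), abs_nonneg (g ω), sq_abs (f ω), sq_abs (g ω),
    sq_nonneg (|f ω| - |g ω|)]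

lemma aux_integrable_div_mul {f g d : Ω → ℝ} {c : ℝ} (hc : 0 < c)
    (hd : ∀ᵐ ω ∂μ, c ≤ d ω) (hdm : AEMeasurable d μ)
    (hf : MemLp f 2 μ) (hg : MemLp g 2 μ) :
    Integrable (fun ω => (f ω / d ω) * g ω) μ := by
  refine Integrable.mono' (((aux_integrable_mul hf hg).norm).const_mul c⁻¹)
    (((hf.1.aemeasurable.div hdm).mul hg.1.aemeasurable).aestronglyMeasurable) ?_
  filter_upwards [hd] with ω hω
  have hd0 : 0 < d ω := lt_of_lt_of_le hc hω
  rw [Real.norm_eq_abs, abs_mul, abs_div, Real.norm_eq_abs, abs_mul,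
    div_mul_eq_mul_div, div_le_iff₀ (abs_pos.mpr hd0.ne')]
  calc |f ω| * |g ω| = c⁻¹ * (|f ω| * |g ω|) * c := by field_simp
    _ ≤ c⁻¹ * (|f ω| * |g ω|) * |d ω| := by
        apply mul_le_mul_of_nonneg_left _ (by positivity)
        rw [abs_of_pos hd0]; exact hω

lemma aux_CS {f g : Ω → ℝ} (hf : MemLp f 2 μ) (hg : MemLp g 2 μ) :
    ∫ ω, |f ω| * |g ω| ∂μ ≤
      (∫ ω, f ω ^ 2 ∂μ) ^ (1/2 : ℝ) * (∫ ω, g ω ^ 2 ∂μ) ^ (1/2 : ℝ) := by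
  have h2 : (ENNReal.ofReal (2:ℝ)) = 2 := by norm_num
  have key : ∀ x : ℝ, ‖x‖ ^ (2:ℝ) = x ^ 2 := fun x => by
    rw [show (2:ℝ) = ((2:ℕ):ℝ) by norm_num, Real.rpow_natCast, Real.norm_eq_abs, sq_abs]
  have h := integral_mul_norm_le_Lp_mul_Lq (f := f) (g := g) (μ := μ)
    (Real.holderConjugate_iff_eq_conjExponent (by norm_num) |>.mpr (by norm_num))
    (h2 ▸ hf) (h2 ▸ hg)
  simp_rw [key, Real.norm_eq_abs] at h
  exact h

lemma aux_bound {f g d : Ω → ℝ} {c : ℝ} (hc : 0 < c)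
    (hd : ∀ᵐ ω ∂μ, c ≤ d ω) (hdm : AEMeasurable d μ)
    (hf : MemLp f 2 μ) (hg : MemLp g 2 μ) :
    |∫ ω, (f ω / d ω) * g ω ∂μ| ≤
      c⁻¹ * ((∫ ω, f ω ^ 2 ∂μ) ^ (1/2 : ℝ) * (∫ ω, g ω ^ 2 ∂μ) ^ (1/2 : ℝ)) := by
  have hInt := aux_integrable_div_mul hc hd hdm hf hg
  have hInt2 : Integrable (fun ω => c⁻¹ * (|f ω| * |g ω|)) μ := by
    refine ((aux_integrable_mul hf hg).abs.const_mul c⁻¹).congr ?_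
    filter_upwards with ω; rw [abs_mul]
  calc |∫ ω, (f ω / d ω) * g ω ∂μ| = ‖∫ ω, (f ω / d ω) * g ω ∂μ‖ :=
        (Real.norm_eq_abs _).symm
    _ ≤ ∫ ω, ‖(f ω / d ω) * g ω‖ ∂μ := norm_integral_le_integral_norm _
    _ ≤ ∫ ω, c⁻¹ * (|f ω| * |g ω|) ∂μ := by
        refine integral_mono_ae hInt.norm hInt2 ?_
        filter_upwards [hd] with ω hω
        have hd0 : 0 < d ω := lt_of_lt_of_le hc hω
        rw [Real.norm_eq_abs, abs_mul, abs_div,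
          div_mul_eq_mul_div, div_le_iff₀ (abs_pos.mpr hd0.ne')]
        calc |f ω| * |g ω| = c⁻¹ * (|f ω| * |g ω|) * c := by field_simp
          _ ≤ c⁻¹ * (|f ω| * |g ω|) * |d ω| := by
              apply mul_le_mul_of_nonneg_left _ (by positivity)
              rw [abs_of_pos hd0]; exact hω
    _ = c⁻¹ * ∫ ω, |f ω| * |g ω| ∂μ := integral_const_mul _ _
    _ ≤ c⁻¹ * ((∫ ω, f ω ^ 2 ∂μ) ^ (1/2 : ℝ) * (∫ ω, g ω ^ 2 ∂μ) ^ (1/2 : ℝ)) :=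
        mul_le_mul_of_nonneg_left (aux_CS hf hg) (by positivity)

end Helpers

/-- Lemma 2 (exact remainder bound): with
`R = ∫ ((π_n − π₀)/π_n)(V)·(m_n − m₀)(V) dμ
   + ∫ [((g_n − g₀)/g_n)(W)(Q_n − Q₀)(1,W) + ((g_n − g₀)/(1 − g_n))(W)(Q_n − Q₀)(0,W)] dμ`,
if `π_n∘V ≥ μ_Π`, `g_n∘W ≥ μ_g`, `1 − g_n∘W ≥ μ_g` a.e. and the displayed differences are
in `L²(μ)`, then
`|R| ≤ μ_Π⁻¹ ‖(π_n−π₀)∘V‖₂ ‖(m_n−m₀)∘V‖₂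
     + μ_g⁻¹ ‖(g_n−g₀)∘W‖₂ (‖(Q_n−Q₀)(1,·)∘W‖₂ + ‖(Q_n−Q₀)(0,·)∘W‖₂)`,
where `‖f‖₂ = (∫ f² dμ)^{1/2}`. -/
theorem lemma2_exact_remainder_bound {Ω 𝒱 𝒲 : Type*}
    {mΩ : MeasurableSpace Ω} [MeasurableSpace 𝒱] [MeasurableSpace 𝒲]
    (μ : Measure Ω) [IsProbabilityMeasure μ]
    (V : Ω → 𝒱) (hV : Measurable V)
    (W : Ω → 𝒲) (hW : Measurable W)
    (πn π₀ mn m₀ : 𝒱 → ℝ)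
    (hπn : Measurable πn) (hπ₀ : Measurable π₀) (hmn : Measurable mn) (hm₀ : Measurable m₀)
    (gn g₀ : 𝒲 → ℝ) (hgn : Measurable gn) (hg₀ : Measurable g₀)
    (Qn Q₀ : ℝ → 𝒲 → ℝ)
    (hQn : Measurable (Function.uncurry Qn)) (hQ₀ : Measurable (Function.uncurry Q₀))
    (muPi mug : ℝ) (hmuPi : 0 < muPi) (hmug : 0 < mug)
    (hπbd : ∀ᵐ ω ∂μ, muPi ≤ πn (V ω))
    (hgbd : ∀ᵐ ω ∂μ, mug ≤ gn (W ω))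
    (hgbd' : ∀ᵐ ω ∂μ, mug ≤ 1 - gn (W ω))
    (hL2π : MemLp (fun ω => πn (V ω) - π₀ (V ω)) 2 μ)
    (hL2m : MemLp (fun ω => mn (V ω) - m₀ (V ω)) 2 μ)
    (hL2g : MemLp (fun ω => gn (W ω) - g₀ (W ω)) 2 μ)
    (hL2Q1 : MemLp (fun ω => Qn 1 (W ω) - Q₀ 1 (W ω)) 2 μ)
    (hL2Q0 : MemLp (fun ω => Qn 0 (W ω) - Q₀ 0 (W ω)) 2 μ)
    (R : ℝ)
    (hR : R = (∫ ω, ((πn (V ω) - π₀ (V ω)) / πn (V ω)) * (mn (V ω) - m₀ (V ω)) ∂μ)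
      + ∫ ω, (((gn (W ω) - g₀ (W ω)) / gn (W ω)) * (Qn 1 (W ω) - Q₀ 1 (W ω))
          + ((gn (W ω) - g₀ (W ω)) / (1 - gn (W ω))) * (Qn 0 (W ω) - Q₀ 0 (W ω))) ∂μ) :
    |R| ≤ muPi⁻¹ * ((∫ ω, (πn (V ω) - π₀ (V ω)) ^ 2 ∂μ) ^ (1/2 : ℝ))
            * ((∫ ω, (mn (V ω) - m₀ (V ω)) ^ 2 ∂μ) ^ (1/2 : ℝ))
      + mug⁻¹ * ((∫ ω, (gn (W ω) - g₀ (W ω)) ^ 2 ∂μ) ^ (1/2 : ℝ))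
            * (((∫ ω, (Qn 1 (W ω) - Q₀ 1 (W ω)) ^ 2 ∂μ) ^ (1/2 : ℝ))
              + ((∫ ω, (Qn 0 (W ω) - Q₀ 0 (W ω)) ^ 2 ∂μ) ^ (1/2 : ℝ))) := by
  
  have hπm : AEMeasurable (fun ω => πn (V ω)) μ := (hπn.comp hV).aemeasurable
  have hgm : AEMeasurable (fun ω => gn (W ω)) μ := (hgn.comp hW).aemeasurable
  have hgm' : AEMeasurable (fun ω => 1 - gn (W ω)) μ :=
    (measurable_const.sub (hgn.comp hW)).aemeasurable
  have h1 := aux_bound hmuPi hπbd hπm hL2π hL2m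
  have h2 := aux_bound hmug hgbd hgm hL2g hL2Q1
  have h3 := aux_bound hmug hgbd' hgm' hL2g hL2Q0
  have hI2 := aux_integrable_div_mul hmug hgbd hgm hL2g hL2Q1
  have hI3 := aux_integrable_div_mul hmug hgbd' hgm' hL2g hL2Q0
  have hsplit : (∫ ω, (((gn (W ω) - g₀ (W ω)) / gn (W ω)) * (Qn 1 (W ω) - Q₀ 1 (W ω))
          + ((gn (W ω) - g₀ (W ω)) / (1 - gn (W ω))) * (Qn 0 (W ω) - Q₀ 0 (W ω))) ∂μ)
      = (∫ ω, ((gn (W ω) - g₀ (W ω)) / gn (W ω)) * (Qn 1 (W ω) - Q₀ 1 (W ω)) ∂μ)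
      + ∫ ω, ((gn (W ω) - g₀ (W ω)) / (1 - gn (W ω))) * (Qn 0 (W ω) - Q₀ 0 (W ω)) ∂μ :=
    integral_add hI2 hI3
  rw [hR, hsplit]
  set I1 := ∫ ω, ((πn (V ω) - π₀ (V ω)) / πn (V ω)) * (mn (V ω) - m₀ (V ω)) ∂μ
  set I2 := ∫ ω, ((gn (W ω) - g₀ (W ω)) / gn (W ω)) * (Qn 1 (W ω) - Q₀ 1 (W ω)) ∂μ
  set I3 := ∫ ω, ((gn (W ω) - g₀ (W ω)) / (1 - gn (W ω))) * (Qn 0 (W ω) - Q₀ 0 (W ω)) ∂μ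
  have habs : |I1 + (I2 + I3)| ≤ |I1| + (|I2| + |I3|) :=
    (abs_add_le _ _).trans (by gcongr; exact abs_add_le _ _)
  refine habs.trans ?_
  have := add_le_add h1 (add_le_add h2 h3)
  refine this.trans (le_of_eq ?_)
  ring
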